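/- Let r ≥ 1 be an integer. Let R_r be the set of tuples (α_0,…,α_r) ∈ ℤ[η]^{r+1} such that for every 1 ≤ l ≤ r, the element ∑_{j=0}^{l} ((−1)^j / (j!(l−j)!)) · α_j of ℚ[η] lies in η^l · ℤ[η]. Then R_r is a subring of the product ring ℤ[η]^{r+1}, and R_r is a free module of rank r+1 over ℤ[η] (acting diagonally). -/

import Mathlib

set_option synthInstance.maxHeartbeats 400000

open Polynomial

open Finset

lemma alt_choose_sum (n a b : ℕ) (han : a ≤ n) :
    ∑ k ∈ range (n+1), (-1:ℤ)^k * (a.choose k) * (k.choose b)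
      = if b = a then (-1:ℤ)^a else 0 := by
  by_cases hba : b ≤ a
  · -- restrict to k ∈ [b, a]
    have h1 : ∑ k ∈ range (n+1), (-1:ℤ)^k * (a.choose k) * (k.choose b)
        = ∑ k ∈ Finset.Ico b (a+1), (-1:ℤ)^k * (a.choose k) * (k.choose b) := by
      rw [Finset.range_eq_Ico]
      refine (Finset.sum_subset (Finset.Ico_subset_Ico (Nat.zero_le _) (by omega)) ?_).symm
      intro k hk hk'
      simp only [Finset.mem_Ico] at hk hk'
      rcases Nat.lt_or_ge k b with h | h
      · simp [Nat.choose_eq_zero_of_lt h]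
      · have : a < k := by omega
        simp [Nat.choose_eq_zero_of_lt this]
    rw [h1, Finset.sum_Ico_eq_sum_range]
    have h2 : ∀ m ∈ range (a + 1 - b), (-1:ℤ)^(b+m) * (a.choose (b+m)) * ((b+m).choose b)
        = (-1:ℤ)^b * (a.choose b) * ((-1:ℤ)^m * ((a-b).choose m)) := by
      intro m hm
      simp only [Finset.mem_range] at hm
      have hba' : b + m ≤ a := by omega
      have := Nat.choose_mul (n := a) (Nat.le_add_right b m)
      have h3 : (a.choose (b+m)) * ((b+m).choose b) = a.choose b * ((a-b).choose m) := by
        simpa using this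
      have h3' : ((a.choose (b+m)) * ((b+m).choose b) : ℤ) = (a.choose b) * ((a-b).choose m) := by
        exact_mod_cast congrArg (Nat.cast : ℕ → ℤ) h3
      calc (-1:ℤ)^(b+m) * (a.choose (b+m)) * ((b+m).choose b)
          = ((a.choose (b+m)) * ((b+m).choose b)) * ((-1:ℤ)^b * (-1)^m) := by rw [pow_add]; ring
        _ = ((a.choose b) * ((a-b).choose m)) * ((-1:ℤ)^b * (-1)^m) := by rw [h3']
        _ = (-1:ℤ)^b * (a.choose b) * ((-1:ℤ)^m * ((a-b).choose m)) := by ring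
    rw [Finset.sum_congr rfl h2, ← Finset.mul_sum]
    have h4 : a + 1 - b = (a - b) + 1 := by omega
    rw [h4, Int.alternating_sum_range_choose]
    rcases eq_or_ne b a with h | h
    · simp [h]
    · have : a - b ≠ 0 := by omega
      simp [this, h, Ne.symm h]
  · rw [if_neg (by omega)]
    apply Finset.sum_eq_zero
    intro k hk
    rcases Nat.lt_or_ge a k with h | h
    · simp [Nat.choose_eq_zero_of_lt h]
    · have : k < b := by omega
      simp [Nat.choose_eq_zero_of_lt this]

noncomputable def bb (r : ℕ) (k : Fin (r+1)) : Fin (r+1) → Polynomial ℤ :=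
  fun j => C (((j:ℕ).descFactorial (k:ℕ) : ℤ)) * X ^ (k:ℕ)

noncomputable def Lsum (r l : ℕ) (α : Fin (r+1) → Polynomial ℤ) : Polynomial ℤ :=
  ∑ j : Fin (r+1), C ((-1:ℤ)^(j:ℕ) * (l.choose (j:ℕ) : ℤ)) * α j

lemma Lsum_add (r l : ℕ) (α β : Fin (r+1) → Polynomial ℤ) :
    Lsum r l (α + β) = Lsum r l α + Lsum r l β := by
  unfold Lsum
  rw [← Finset.sum_add_distrib]
  exact Finset.sum_congr rfl fun j _ => by rw [Pi.add_apply, mul_add]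

lemma Lsum_smul (r l : ℕ) (c : Polynomial ℤ) (α : Fin (r+1) → Polynomial ℤ) :
    Lsum r l (c • α) = c * Lsum r l α := by
  unfold Lsum
  rw [Finset.mul_sum]
  exact Finset.sum_congr rfl fun j _ => by
    rw [Pi.smul_apply, smul_eq_mul, mul_left_comm]

noncomputable def SM (r : ℕ) : Submodule (Polynomial ℤ) (Fin (r+1) → Polynomial ℤ) where
  carrier := {α | ∀ l : ℕ, l ≤ r → ∃ g, Lsum r l α = C (l.factorial : ℤ) * X^l * g}
  add_mem' := fun {a b} ha hb l hl => by
    obtain ⟨g1, hg1⟩ := ha l hl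
    obtain ⟨g2, hg2⟩ := hb l hl
    exact ⟨g1 + g2, by rw [Lsum_add, hg1, hg2, mul_add]⟩
  zero_mem' := fun l hl => ⟨0, by simp [Lsum]⟩
  smul_mem' := fun c a ha l hl => by
    obtain ⟨g, hg⟩ := ha l hl
    exact ⟨c * g, by rw [Lsum_smul, hg]; ring⟩

lemma Lsum_bb (r l : ℕ) (hl : l ≤ r) (k : Fin (r+1)) :
    Lsum r l (bb r k) = if (k:ℕ) = l then C ((-1:ℤ)^l * (l.factorial : ℤ)) * X^l else 0 := by
  unfold Lsum bb
  have h1 : ∀ j : Fin (r+1),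
      C ((-1:ℤ)^(j:ℕ) * (l.choose (j:ℕ) : ℤ)) * (C (((j:ℕ).descFactorial (k:ℕ) : ℤ)) * X ^ (k:ℕ))
      = C ((-1:ℤ)^(j:ℕ) * (l.choose (j:ℕ)) * ((j:ℕ).descFactorial (k:ℕ))) * X ^ (k:ℕ) := by
    intro j; rw [← mul_assoc, ← C_mul]
  rw [Finset.sum_congr rfl (fun j _ => h1 j), ← Finset.sum_mul, ← map_sum C]
  have hsum : ∑ j : Fin (r+1), (-1:ℤ)^(j:ℕ) * (l.choose (j:ℕ)) * (((j:ℕ).descFactorial (k:ℕ) : ℤ))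
      = ((k:ℕ).factorial : ℤ) * (if (k:ℕ) = l then (-1:ℤ)^l else 0) := by
    rw [Fin.sum_univ_eq_sum_range (fun j => (-1:ℤ)^j * (l.choose j) * ((j.descFactorial (k:ℕ) : ℤ)))]
    have h2 : ∀ j, (-1:ℤ)^j * (l.choose j) * ((j.descFactorial (k:ℕ) : ℤ))
        = ((k:ℕ).factorial : ℤ) * ((-1:ℤ)^j * (l.choose j) * (j.choose (k:ℕ))) := by
      intro j; rw [Nat.descFactorial_eq_factorial_mul_choose]; push_cast; ring
    rw [Finset.sum_congr rfl fun j _ => h2 j, ← Finset.mul_sum, alt_choose_sum r l (k:ℕ) hl]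
  rw [hsum]
  split
  next h =>
    rw [h, mul_comm ((l.factorial : ℤ)) ((-1:ℤ)^l)]
  next h => simp


lemma bb_mem_SM (r : ℕ) (k : Fin (r+1)) : bb r k ∈ SM r := by
  intro l hl
  rw [Lsum_bb r l hl k]
  by_cases h : (k:ℕ) = l
  · exact ⟨C ((-1:ℤ)^l), by rw [if_pos h, C_mul]; ring⟩
  · exact ⟨0, by rw [if_neg h]; ring⟩

lemma newton (r : ℕ) (α : Fin (r+1) → Polynomial ℤ) (j : Fin (r+1)) :
    ∑ k : Fin (r+1), C ((-1:ℤ)^(k:ℕ) * ((j:ℕ).choose (k:ℕ) : ℤ)) * Lsum r (k:ℕ) α = α j := by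
  unfold Lsum
  have step1 : ∀ k : Fin (r+1),
      C ((-1:ℤ)^(k:ℕ) * ((j:ℕ).choose (k:ℕ) : ℤ)) *
        ∑ i : Fin (r+1), C ((-1:ℤ)^(i:ℕ) * (((k:ℕ).choose (i:ℕ) : ℕ) : ℤ)) * α i
      = ∑ i : Fin (r+1),
          C ((-1:ℤ)^(i:ℕ) * ((-1:ℤ)^(k:ℕ) * ((j:ℕ).choose (k:ℕ)) * ((k:ℕ).choose (i:ℕ)))) * α i := by
    intro k
    rw [Finset.mul_sum]
    refine Finset.sum_congr rfl fun i _ => ?_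
    rw [← mul_assoc, ← C_mul]
    congr 2
    ring
  rw [Finset.sum_congr rfl fun k _ => step1 k, Finset.sum_comm]
  have step2 : ∀ i : Fin (r+1),
      ∑ k : Fin (r+1),
        C ((-1:ℤ)^(i:ℕ) * ((-1:ℤ)^(k:ℕ) * ((j:ℕ).choose (k:ℕ)) * ((k:ℕ).choose (i:ℕ)))) * α i
      = (if i = j then α j else 0) := by
    intro i
    have hC : ∑ k : Fin (r+1),
        C ((-1:ℤ)^(i:ℕ) * ((-1:ℤ)^(k:ℕ) * ((j:ℕ).choose (k:ℕ)) * ((k:ℕ).choose (i:ℕ))))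
        = (if i = j then (1 : Polynomial ℤ) else 0) := by
      rw [← map_sum C]
      have hmul : ∑ k : Fin (r+1), (-1:ℤ)^(i:ℕ) * ((-1:ℤ)^(k:ℕ) * ((j:ℕ).choose (k:ℕ)) * ((k:ℕ).choose (i:ℕ)))
          = (-1:ℤ)^(i:ℕ) * ∑ k ∈ range (r+1), (-1:ℤ)^k * ((j:ℕ).choose k) * (k.choose (i:ℕ)) := by
        rw [Finset.mul_sum,
          Fin.sum_univ_eq_sum_range (fun k => (-1:ℤ)^(i:ℕ) * ((-1:ℤ)^k * ((j:ℕ).choose k) * (k.choose (i:ℕ))))]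
      rw [hmul, alt_choose_sum r (j:ℕ) (i:ℕ) (Nat.lt_succ_iff.mp j.isLt)]
      by_cases h : i = j
      · rw [if_pos (by rw [h]), if_pos h, h, ← pow_add, Even.neg_one_pow ⟨(j:ℕ), by ring⟩, map_one]
      · rw [if_neg (fun hh => h (Fin.val_injective hh)), if_neg h, mul_zero, map_zero]
    rw [← Finset.sum_mul, hC]
    by_cases h : i = j
    · rw [if_pos h, if_pos h, one_mul, h]
    · rw [if_neg h, if_neg h, zero_mul]
  rw [Finset.sum_congr rfl fun i _ => step2 i]
  simp

noncomputable def ww (r : ℕ) : Fin (r+1) → Polynomial ℤ := fun j => C ((j:ℕ) : ℤ) * X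

lemma SM_le_span (r : ℕ) (α : Fin (r+1) → Polynomial ℤ)
    (hα : ∀ l : ℕ, l ≤ r → ∃ g, Lsum r l α = C (l.factorial : ℤ) * X^l * g) :
    α ∈ Submodule.span (Polynomial ℤ) (Set.range (bb r)) := by
  have hg : ∀ k : Fin (r+1), ∃ g, Lsum r (k:ℕ) α = C (((k:ℕ).factorial : ℤ)) * X^(k:ℕ) * g :=
    fun k => hα (k:ℕ) (Nat.lt_succ_iff.mp k.isLt)
  choose g hgspec using hg
  have key : α = ∑ k : Fin (r+1), (C ((-1:ℤ)^(k:ℕ)) * g k) • bb r k := by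
    funext j
    rw [Finset.sum_apply]
    have hterm : ∀ k : Fin (r+1), ((C ((-1:ℤ)^(k:ℕ)) * g k) • bb r k) j
        = C ((-1:ℤ)^(k:ℕ) * ((j:ℕ).choose (k:ℕ) : ℤ)) * Lsum r (k:ℕ) α := by
      intro k
      rw [Pi.smul_apply, smul_eq_mul]
      show (C ((-1:ℤ)^(k:ℕ)) * g k) * (C (((j:ℕ).descFactorial (k:ℕ) : ℤ)) * X ^ (k:ℕ)) = _
      rw [hgspec k, Nat.descFactorial_eq_factorial_mul_choose]
      push_cast
      simp only [C_mul]
      ring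
    rw [Finset.sum_congr rfl fun k _ => hterm k, newton r α j]
  rw [key]
  exact Submodule.sum_mem _ fun k _ =>
    Submodule.smul_mem _ _ (Submodule.subset_span ⟨k, rfl⟩)

lemma prod_range_cast (j k : ℕ) :
    ∏ i ∈ range k, ((j:ℤ) - (i:ℤ)) = (j.descFactorial k : ℤ) := by
  induction k with
  | zero => simp
  | succ k ih =>
    rw [Finset.prod_range_succ, ih, Nat.descFactorial_succ]
    rcases Nat.lt_or_ge j k with h | h
    · rw [Nat.descFactorial_eq_zero_iff_lt.mpr h]
      simp
    · push_cast [Nat.cast_sub h]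
      ring

lemma one_eq_bb0 (r : ℕ) : (1 : Fin (r+1) → Polynomial ℤ) = bb r 0 := by
  funext j; simp [bb]

lemma w_mul_bb (r : ℕ) (k : Fin (r+1)) :
    ww r * bb r k = (fun j : Fin (r+1) => C (((j:ℕ).descFactorial ((k:ℕ)+1) : ℤ)) * X ^ ((k:ℕ)+1))
      + (C ((k:ℕ):ℤ) * X) • bb r k := by
  funext j
  simp only [Pi.mul_apply, Pi.add_apply, Pi.smul_apply, smul_eq_mul, ww, bb]
  have hnat : (j:ℕ) * (j:ℕ).descFactorial (k:ℕ)
      = (j:ℕ).descFactorial ((k:ℕ)+1) + (k:ℕ) * (j:ℕ).descFactorial (k:ℕ) := by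
    rcases Nat.lt_or_ge (j:ℕ) (k:ℕ) with h | h
    · rw [Nat.descFactorial_eq_zero_iff_lt.mpr h,
        Nat.descFactorial_eq_zero_iff_lt.mpr (by omega : (j:ℕ) < (k:ℕ)+1)]
      simp
    · rw [Nat.descFactorial_succ, ← Nat.add_mul, Nat.sub_add_cancel h]
  calc C ((j:ℕ):ℤ) * X * (C (((j:ℕ).descFactorial (k:ℕ) : ℤ)) * X ^ (k:ℕ))
      = C ((((j:ℕ) * (j:ℕ).descFactorial (k:ℕ) : ℕ)) : ℤ) * X ^ ((k:ℕ)+1) := by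
        push_cast; simp only [C_mul]; ring
    _ = C ((((j:ℕ).descFactorial ((k:ℕ)+1) + (k:ℕ) * (j:ℕ).descFactorial (k:ℕ) : ℕ)) : ℤ)
          * X ^ ((k:ℕ)+1) := by rw [hnat]
    _ = _ := by push_cast; simp only [C_add, C_mul]; ring

lemma w_mul_mem (r : ℕ) (x : Fin (r+1) → Polynomial ℤ)
    (hx : x ∈ Submodule.span (Polynomial ℤ) (Set.range (bb r))) :
    ww r * x ∈ Submodule.span (Polynomial ℤ) (Set.range (bb r)) := by
  induction hx using Submodule.span_induction with
  | mem y hy =>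
    obtain ⟨k, rfl⟩ := hy
    rw [w_mul_bb]
    refine Submodule.add_mem _ ?_
      (Submodule.smul_mem _ _ (Submodule.subset_span ⟨k, rfl⟩))
    rcases Nat.lt_or_ge ((k:ℕ)+1) (r+1) with h | h
    · exact Submodule.subset_span ⟨⟨(k:ℕ)+1, h⟩, rfl⟩
    · have hz : (fun j : Fin (r+1) => C (((j:ℕ).descFactorial ((k:ℕ)+1) : ℤ)) * X ^ ((k:ℕ)+1))
          = (0 : Fin (r+1) → Polynomial ℤ) := by
        funext j
        rw [Nat.descFactorial_eq_zero_iff_lt.mpr (by omega : (j:ℕ) < (k:ℕ)+1)]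
        simp
      rw [hz]
      exact Submodule.zero_mem _
  | zero => rw [mul_zero]; exact Submodule.zero_mem _
  | add y z _ _ hy hz => rw [mul_add]; exact Submodule.add_mem _ hy hz
  | smul c y _ hy => rw [mul_smul_comm]; exact Submodule.smul_mem _ _ hy

lemma wpow_mem (r : ℕ) (n : ℕ) :
    (ww r)^n ∈ Submodule.span (Polynomial ℤ) (Set.range (bb r)) := by
  induction n with
  | zero => rw [pow_zero, one_eq_bb0]; exact Submodule.subset_span ⟨0, rfl⟩
  | succ n ih => rw [pow_succ'] ; exact w_mul_mem r _ ih

lemma adjoin_le_span (r : ℕ) (x : Fin (r+1) → Polynomial ℤ)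
    (hx : x ∈ Algebra.adjoin (Polynomial ℤ) {ww r}) :
    x ∈ Submodule.span (Polynomial ℤ) (Set.range (bb r)) := by
  rw [Algebra.adjoin_singleton_eq_range_aeval] at hx
  obtain ⟨p, rfl⟩ := hx
  show (aeval (ww r)) p ∈ _
  rw [Polynomial.aeval_eq_sum_range]
  exact Submodule.sum_mem _ fun i _ => Submodule.smul_mem _ _ (wpow_mem r i)

lemma bb_mem_adjoin (r : ℕ) (k : Fin (r+1)) :
    bb r k ∈ Algebra.adjoin (Polynomial ℤ) {ww r} := by
  have hbb : bb r k = ∏ i ∈ range (k:ℕ),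
      (ww r - algebraMap (Polynomial ℤ) (Fin (r+1) → Polynomial ℤ) (C (i:ℤ) * X)) := by
    funext j
    rw [Finset.prod_apply]
    have hfac : ∀ i ∈ range (k:ℕ),
        ((ww r - algebraMap (Polynomial ℤ) (Fin (r+1) → Polynomial ℤ) (C (i:ℤ) * X)) j)
        = C (((j:ℕ):ℤ) - (i:ℤ)) * X := by
      intro i _
      rw [Pi.sub_apply]
      show C ((j:ℕ):ℤ) * X - C (i:ℤ) * X = _
      rw [← sub_mul, ← C_sub]
    rw [Finset.prod_congr rfl hfac, Finset.prod_mul_distrib, Finset.prod_const,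
      Finset.card_range,
      ← map_prod C (fun i : ℕ => ((j:ℕ):ℤ) - (i:ℤ)) (range (k:ℕ)), prod_range_cast]
    rfl
  rw [hbb]
  exact Subalgebra.prod_mem _ fun i _ => Subalgebra.sub_mem _
    (Algebra.subset_adjoin (Set.mem_singleton _))
    (Subalgebra.algebraMap_mem _ _)

lemma bb_li (r : ℕ) : LinearIndependent (Polynomial ℤ) (bb r) := by
  rw [Fintype.linearIndependent_iff]
  intro c hc
  suffices h : ∀ n : ℕ, ∀ hn : n < r+1, c ⟨n, hn⟩ = 0 by
    intro k
    have := h (k:ℕ) k.isLt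
    simpa using this
  intro n
  induction n using Nat.strong_induction_on with
  | _ n ih =>
    intro hn
    have hj := congrFun hc ⟨n, hn⟩
    rw [Finset.sum_apply] at hj
    have hterm : ∀ i : Fin (r+1), (c i • bb r i) ⟨n, hn⟩
        = c i * (C ((n.descFactorial (i:ℕ) : ℤ)) * X^(i:ℕ)) := fun i => rfl
    rw [Finset.sum_congr rfl fun i _ => hterm i] at hj
    rw [Finset.sum_eq_single (⟨n, hn⟩ : Fin (r+1))] at hj
    · have hne : C ((n.descFactorial n : ℤ)) * X^n ≠ 0 := by
        apply mul_ne_zero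
        · simp [Nat.descFactorial_self, Nat.factorial_ne_zero]
        · exact pow_ne_zero _ X_ne_zero
      have := mul_eq_zero.mp hj
      rcases this with h | h
      · exact h
      · exact absurd h hne
    · intro i _ hne
      rcases Nat.lt_or_ge n (i:ℕ) with h | h
      · rw [Nat.descFactorial_eq_zero_iff_lt.mpr h]
        simp
      · have hlt : (i:ℕ) < n := by
          rcases Nat.lt_or_ge (i:ℕ) n with h' | h'
          · exact h'
          · exfalso
            exact hne (Fin.ext (show (i:ℕ) = n by omega))
        have hci : c i = 0 := by
          have := ih (i:ℕ) hlt i.isLt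
          simpa using this
        rw [hci, zero_mul]
    · intro h
      exact absurd (Finset.mem_univ _) h

lemma cond_iff (r l : ℕ) (hl1 : 1 ≤ l) (hlr : l ≤ r) (α : Fin (r+1) → Polynomial ℤ) :
    (∃ g : Polynomial ℤ,
      ∑ j ∈ Finset.univ.filter (fun j : Fin (r+1) => (j:ℕ) ≤ l),
        C ((-1:ℚ)^(j:ℕ) / (((j:ℕ).factorial : ℚ) * ((l - (j:ℕ)).factorial : ℚ))) *
          (α j).map (Int.castRingHom ℚ)
        = X^l * g.map (Int.castRingHom ℚ))
    ↔ (∃ g : Polynomial ℤ, Lsum r l α = C (l.factorial : ℤ) * X^l * g) := by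
  have hC0 : (C ((l.factorial : ℚ)) : Polynomial ℚ) ≠ 0 := by
    rw [Ne, Polynomial.C_eq_zero]
    exact_mod_cast Nat.factorial_ne_zero l
  have hmap : (Lsum r l α).map (Int.castRingHom ℚ)
      = C ((l.factorial : ℚ)) * ∑ j ∈ Finset.univ.filter (fun j : Fin (r+1) => (j:ℕ) ≤ l),
          C ((-1:ℚ)^(j:ℕ) / (((j:ℕ).factorial : ℚ) * ((l - (j:ℕ)).factorial : ℚ))) *
            (α j).map (Int.castRingHom ℚ) := by
    unfold Lsum
    rw [Polynomial.map_sum,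
      ← Finset.sum_filter_add_sum_filter_not Finset.univ (fun j : Fin (r+1) => (j:ℕ) ≤ l)]
    have hz : ∑ j ∈ Finset.univ.filter (fun j : Fin (r+1) => ¬ (j:ℕ) ≤ l),
        ((C ((-1:ℤ)^(j:ℕ) * (l.choose (j:ℕ) : ℤ)) * α j).map (Int.castRingHom ℚ)) = 0 := by
      apply Finset.sum_eq_zero
      intro j hj
      rw [Finset.mem_filter] at hj
      rw [Nat.choose_eq_zero_of_lt (by omega)]
      simp
    rw [hz, add_zero, Finset.mul_sum]
    apply Finset.sum_congr rfl
    intro j hj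
    rw [Finset.mem_filter] at hj
    have h := Nat.choose_mul_factorial_mul_factorial hj.2
    have h1 : (((j:ℕ).factorial : ℚ)) ≠ 0 := Nat.cast_ne_zero.mpr (Nat.factorial_ne_zero _)
    have h2 : (((l - (j:ℕ)).factorial : ℚ)) ≠ 0 := Nat.cast_ne_zero.mpr (Nat.factorial_ne_zero _)
    have hsc : (((-1:ℤ)^(j:ℕ) * (l.choose (j:ℕ) : ℤ) : ℤ) : ℚ)
        = (l.factorial : ℚ) * ((-1:ℚ)^(j:ℕ) / (((j:ℕ).factorial : ℚ) * ((l - (j:ℕ)).factorial : ℚ))) := by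
      field_simp
      push_cast [← h]
      ring
    calc (C ((-1:ℤ)^(j:ℕ) * (l.choose (j:ℕ) : ℤ)) * α j).map (Int.castRingHom ℚ)
        = C ((((-1:ℤ)^(j:ℕ) * (l.choose (j:ℕ) : ℤ) : ℤ) : ℚ)) * (α j).map (Int.castRingHom ℚ) := by
          simp only [Polynomial.map_mul, Polynomial.map_C, Int.coe_castRingHom]
      _ = C ((l.factorial : ℚ)) *
            (C ((-1:ℚ)^(j:ℕ) / (((j:ℕ).factorial : ℚ) * ((l - (j:ℕ)).factorial : ℚ))) *
              (α j).map (Int.castRingHom ℚ)) := by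
          rw [hsc, C_mul]; ring
  constructor
  · rintro ⟨g, hg⟩
    refine ⟨g, ?_⟩
    apply Polynomial.map_injective (Int.castRingHom ℚ) Int.cast_injective
    rw [hmap, hg, Polynomial.map_mul, Polynomial.map_mul, Polynomial.map_C, Polynomial.map_pow,
      Polynomial.map_X]
    simp only [Int.coe_castRingHom]
    push_cast
    ring
  · rintro ⟨g, hg⟩
    refine ⟨g, ?_⟩
    apply mul_left_cancel₀ hC0
    rw [← hmap, hg, Polynomial.map_mul, Polynomial.map_mul, Polynomial.map_C, Polynomial.map_pow,
      Polynomial.map_X]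
    simp only [Int.coe_castRingHom]
    push_cast
    ring

set_option synthInstance.maxHeartbeats 400000


/-- The set `R_r` of tuples `(α_0,…,α_r) ∈ ℤ[η]^{r+1}` satisfying the integral
localization relations for `ℙ^r` is a subring of the product ring, closed under
the diagonal `ℤ[η]`-action, and is a free `ℤ[η]`-module of rank `r+1`. -/
theorem projective_space_localization_integral (r : ℕ) (hr : 1 ≤ r) :
    ∃ Rr : Subalgebra (Polynomial ℤ) (Fin (r + 1) → Polynomial ℤ),
      (Rr : Set (Fin (r + 1) → Polynomial ℤ)) =
        {α | ∀ l : ℕ, 1 ≤ l → l ≤ r →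
          ∃ g : Polynomial ℤ,
            ∑ j ∈ Finset.univ.filter (fun j : Fin (r + 1) => (j : ℕ) ≤ l),
              C ((-1 : ℚ) ^ (j : ℕ) /
                  (((j : ℕ).factorial : ℚ) * ((l - (j : ℕ)).factorial : ℚ))) *
                (α j).map (Int.castRingHom ℚ)
              = X ^ l * g.map (Int.castRingHom ℚ)} ∧
      Module.Free (Polynomial ℤ) Rr ∧
      Module.rank (Polynomial ℤ) Rr = r + 1 := by
  have hMle : Submodule.span (Polynomial ℤ) (Set.range (bb r))
      ≤ Subalgebra.toSubmodule (Algebra.adjoin (Polynomial ℤ) {ww r}) :=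
    Submodule.span_le.mpr (by rintro _ ⟨k, rfl⟩; exact bb_mem_adjoin r k)
  have hsubmod : Subalgebra.toSubmodule (Algebra.adjoin (Polynomial ℤ) {ww r})
      = Submodule.span (Polynomial ℤ) (Set.range (bb r)) :=
    le_antisymm (fun x hx => adjoin_le_span r x hx) hMle
  refine ⟨Algebra.adjoin (Polynomial ℤ) {ww r}, ?_, ?_, ?_⟩
  · ext α
    simp only [SetLike.mem_coe, Set.mem_setOf_eq]
    constructor
    · intro hα l hl1 hlr
      have hM : α ∈ Submodule.span (Polynomial ℤ) (Set.range (bb r)) :=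
        adjoin_le_span r α hα
      have hSM : α ∈ SM r :=
        Submodule.span_le.mpr (by rintro _ ⟨k, rfl⟩; exact bb_mem_SM r k) hM
      exact (cond_iff r l hl1 hlr α).mpr (hSM l hlr)
    · intro hα
      apply hMle
      apply SM_le_span r α
      intro l hl
      rcases Nat.eq_zero_or_pos l with rfl | hl1
      · exact ⟨Lsum r 0 α, by simp⟩
      · exact (cond_iff r l hl1 hl α).mp (hα l hl1 hl)
  · exact Module.Free.of_basis
      ((Module.Basis.span (bb_li r)).map
        ((LinearEquiv.ofEq _ _ hsubmod.symm).trans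
          (Subalgebra.toSubmoduleEquiv (Algebra.adjoin (Polynomial ℤ) {ww r}))))
  · rw [rank_eq_card_basis
      ((Module.Basis.span (bb_li r)).map
        ((LinearEquiv.ofEq _ _ hsubmod.symm).trans
          (Subalgebra.toSubmoduleEquiv (Algebra.adjoin (Polynomial ℤ) {ww r}))))]
    simp
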